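/- arXiv:1910.06934 — 2 statements merged into one kernel-verified Lean document; each statement's English description precedes it below -/
import Mathlib

section
/- Let L be a real symmetric n×n matrix that is conditionally positive semidefinite. Then the matrix with entries exp(L_{i,j}) (the entrywise exponential of L) is positive semidefinite. -/
/-- A real symmetric matrix `L` is conditionally positive semidefinite if
`∑ i j, c i * c j * L i j ≥ 0` for all real vectors `c` with `∑ i, c i = 0`. -/
def CondPosSemidef {m : ℕ} (L : Matrix (Fin m) (Fin m) ℝ) : Prop :=
  ∀ c : Fin m → ℝ, (∑ i, c i) = 0 → 0 ≤ ∑ i, ∑ j, c i * c j * L i j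

/-- A real symmetric matrix `M` is positive semidefinite if
`∑ i j, c i * c j * M i j ≥ 0` for all real vectors `c`. -/
def PosSemidefQuad {m : ℕ} (M : Matrix (Fin m) (Fin m) ℝ) : Prop :=
  ∀ c : Fin m → ℝ, 0 ≤ ∑ i, ∑ j, c i * c j * M i j

open Finset

/-- Entrywise powers of Gram matrices have nonnegative quadratic form. -/
lemma gram_pow_quad_nonneg {n : ℕ} (B : Matrix (Fin n) (Fin n) ℝ) (c : Fin n → ℝ) (k : ℕ) :
    0 ≤ ∑ i, ∑ j, c i * c j * (∑ r, B r i * B r j) ^ k := by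
  have expand : ∀ i j : Fin n, (∑ r, B r i * B r j) ^ k
      = ∑ g : Fin k → Fin n, (∏ t, B (g t) i) * (∏ t, B (g t) j) := by
    intro i j
    rw [Fintype.sum_pow]
    exact Fintype.sum_congr _ _ fun g => by rw [Finset.prod_mul_distrib]
  have key : ∑ i, ∑ j, c i * c j * (∑ r, B r i * B r j) ^ k
      = ∑ g : Fin k → Fin n, (∑ i, c i * ∏ t, B (g t) i) ^ 2 := by
    simp_rw [expand, Finset.mul_sum, sq, Finset.sum_mul_sum]
    conv_rhs => rw [Finset.sum_comm]
    refine Finset.sum_congr rfl fun i _ => ?_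
    conv_rhs => rw [Finset.sum_comm]
    exact Finset.sum_congr rfl fun i _ => Finset.sum_congr rfl fun j _ => by ring
  rw [key]
  exact Finset.sum_nonneg fun g _ => sq_nonneg _

/-- Entrywise exponential of a PSD matrix has nonnegative quadratic form. -/
lemma exp_quad_nonneg {n : ℕ} (K : Matrix (Fin n) (Fin n) ℝ) (hK : K.PosSemidef)
    (c : Fin n → ℝ) : 0 ≤ ∑ i, ∑ j, c i * c j * Real.exp (K i j) := by
  obtain ⟨B, hB⟩ : ∃ B : Matrix (Fin n) (Fin n) ℝ, K = Matrix.conjTranspose B * B := by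
    open scoped MatrixOrder in simpa [Matrix.star_eq_conjTranspose] using CStarAlgebra.nonneg_iff_eq_star_mul_self.mp hK.nonneg
  have hKe : ∀ i j, K i j = ∑ r, B r i * B r j := by
    intro i j
    rw [hB]
    simp [Matrix.mul_apply, Matrix.conjTranspose_apply, mul_comm]
  have hexp : ∀ x : ℝ, Real.exp x = ∑' k : ℕ, x ^ k / (Nat.factorial k : ℝ) := by
    intro x
    rw [Real.exp_eq_exp_ℝ, NormedSpace.exp_eq_tsum_div]
  have hsummable : ∀ (i j : Fin n),
      Summable (fun k : ℕ => c i * c j * (K i j ^ k / (Nat.factorial k : ℝ))) :=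
    fun i j => (Real.summable_pow_div_factorial (K i j)).mul_left _
  have step : ∑ i, ∑ j, c i * c j * Real.exp (K i j)
      = ∑' k : ℕ, ∑ i, ∑ j, c i * c j * (K i j ^ k / (Nat.factorial k : ℝ)) := by
    simp_rw [hexp, ← tsum_mul_left]
    rw [Summable.tsum_finsetSum (f := fun i k => ∑ j, c i * c j * (K i j ^ k / (Nat.factorial k : ℝ)))
      fun i _ => summable_sum fun j _ => hsummable i j]
    exact Finset.sum_congr rfl fun i _ => (Summable.tsum_finsetSum fun j _ => hsummable i j).symm
  rw [step]
  refine tsum_nonneg fun k => ?_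
  simp_rw [hKe, div_eq_mul_inv, ← mul_assoc, ← Finset.sum_mul]
  exact mul_nonneg (gram_pow_quad_nonneg B c k) (inv_nonneg.2 (Nat.cast_nonneg _))

/-- If a real symmetric `n × n` matrix `L` is conditionally positive semidefinite, then
its entrywise exponential `(exp (L i j))` is positive semidefinite. -/
theorem entrywise_exp_posSemidef_of_cpd (n : ℕ)
    (L : Matrix (Fin n) (Fin n) ℝ) (hsymm : L.IsSymm) (hcpd : CondPosSemidef L) :
    PosSemidefQuad (Matrix.of fun i j => Real.exp (L i j)) := by
  rcases Nat.eq_zero_or_pos n with hn | hn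
  · subst hn; intro c; simp
  set z : Fin n := ⟨0, hn⟩ with hz
  set K : Matrix (Fin n) (Fin n) ℝ :=
    Matrix.of (fun i j => L i j - L i z - L j z + L z z) with hKdef
  have hKps : K.PosSemidef := by
    rw [Matrix.posSemidef_iff_dotProduct_mulVec]
    constructor
    · ext i j
      simp only [Matrix.conjTranspose_apply, hKdef, Matrix.of_apply, star_trivial]
      have := hsymm.apply i j
      linarith
    · intro x
      set s : ℝ := ∑ i, x i with hs
      set d : Fin n → ℝ := fun i => x i - (if i = z then s else 0) with hd
      have hdsum : ∑ i, d i = 0 := by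
        simp [hd, Finset.sum_sub_distrib, Finset.sum_ite_eq', hs]
      have h0 := hcpd d hdsum
      have hcollapse : ∀ f : Fin n → ℝ,
          ∑ i, (if i = z then s else 0) * f i = s * f z := by
        intro f; simp [Finset.sum_ite_eq']
      have key : ∑ i, ∑ j, d i * d j * L i j
          = ∑ i, ∑ j, x i * x j * K i j := by
        have lhs_eq : ∑ i, ∑ j, d i * d j * L i j
            = (∑ i, ∑ j, x i * x j * L i j) - s * (∑ j, x j * L z j)
              - s * (∑ i, x i * L i z) + s * s * L z z := by
          simp only [hd, sub_mul, mul_sub, Finset.sum_sub_distrib, ite_mul, mul_ite,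
            mul_zero, zero_mul, Finset.sum_ite_irrel, Finset.sum_const_zero,
            Finset.sum_ite_eq', Finset.mem_univ, if_true]
          have r2 : s * ∑ j, x j * L z j = ∑ j, s * x j * L z j := by
            rw [Finset.mul_sum]; exact Finset.sum_congr rfl fun j _ => by ring
          have r3 : s * ∑ i, x i * L i z = ∑ i, x i * s * L i z := by
            rw [Finset.mul_sum]; exact Finset.sum_congr rfl fun i _ => by ring
          rw [r2, r3]
          ring
        have rhs_eq : ∑ i, ∑ j, x i * x j * K i j
            = (∑ i, ∑ j, x i * x j * L i j) - s * (∑ j, x j * L z j)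
              - s * (∑ i, x i * L i z) + s * s * L z z := by
          simp only [hKdef, Matrix.of_apply, mul_sub, mul_add, Finset.sum_sub_distrib,
            Finset.sum_add_distrib]
          have e2 : ∑ i, ∑ j, x i * x j * L i z = s * ∑ i, x i * L i z := by
            rw [Finset.mul_sum]
            refine Finset.sum_congr rfl fun i _ => ?_
            rw [hs, Finset.sum_mul]
            exact Finset.sum_congr rfl fun j _ => by ring
          have e3 : ∑ i, ∑ j, x i * x j * L j z = s * ∑ j, x j * L j z := by
            rw [hs, Finset.sum_mul]
            refine Finset.sum_congr rfl fun i _ => ?_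
            rw [Finset.mul_sum]
            exact Finset.sum_congr rfl fun j _ => by ring
          have e4 : ∑ i : Fin n, ∑ j : Fin n, x i * x j * L z z = s * s * L z z := by
            have h4 : ∀ i, ∑ j, x i * x j * L z z = x i * (s * L z z) := by
              intro i; rw [hs, Finset.sum_mul, Finset.mul_sum]
              exact Finset.sum_congr rfl fun j _ => by ring
            simp_rw [h4, ← Finset.sum_mul, ← hs]; ring
          have hsz : ∑ j, x j * L z j = ∑ j, x j * L j z :=
            Finset.sum_congr rfl fun j _ => by rw [hsymm.apply]
          rw [e2, e3, e4, hsz]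
        rw [lhs_eq, rhs_eq]
      have hform : dotProduct (star x) (K.mulVec x) = ∑ i, ∑ j, x i * x j * K i j := by
        simp only [dotProduct, Matrix.mulVec, star_trivial, Finset.mul_sum]
        exact Finset.sum_congr rfl fun i _ => Finset.sum_congr rfl fun j _ => by ring
      rw [hform, ← key]
      exact h0
  intro c
  set a : Fin n → ℝ := fun i => Real.exp (L i z - L z z / 2) with ha
  have hfact : ∀ i j, Real.exp (L i j) = a i * a j * Real.exp (K i j) := by
    intro i j
    simp only [ha, hKdef, Matrix.of_apply, ← Real.exp_add]
    congr 1; ring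
  have := exp_quad_nonneg K hKps (fun i => c i * a i)
  calc (0:ℝ) ≤ ∑ i, ∑ j, (c i * a i) * (c j * a j) * Real.exp (K i j) := this
    _ = ∑ i, ∑ j, c i * c j * (Matrix.of fun i j => Real.exp (L i j)) i j := by
        refine Finset.sum_congr rfl fun i _ => Finset.sum_congr rfl fun j _ => ?_
        rw [Matrix.of_apply, hfact i j]; ring
end

section
/- Let K be a real symmetric n×n matrix. Then K is conditionally positive semidefinite if and only if for every real α > 0 the matrix with entries exp(α K_{i,j}) (the entrywise exponential of αK) is positive semidefinite. -/
lemma isHermitian_of_isSymm {m : ℕ} {A : Matrix (Fin m) (Fin m) ℝ} (h : A.IsSymm) :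
    A.IsHermitian := by
  ext i j
  simpa using h.apply i j

lemma sum_rotate {m : ℕ} (f : Fin m → Fin m → Fin m → ℝ) :
    ∑ i, ∑ j, ∑ k, f i j k = ∑ k, ∑ i, ∑ j, f i j k := by
  calc ∑ i, ∑ j, ∑ k, f i j k
      = ∑ i, ∑ k, ∑ j, f i j k := Finset.sum_congr rfl fun i _ => Finset.sum_comm
    _ = ∑ k, ∑ i, ∑ j, f i j k := Finset.sum_comm

lemma psdq_mul {m : ℕ} {A B : Matrix (Fin m) (Fin m) ℝ} (hA : A.IsSymm)
    (hAq : PosSemidefQuad A) (hB : PosSemidefQuad B) :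
    PosSemidefQuad (Matrix.of fun i j => A i j * B i j) := by
  have hps : A.PosSemidef := by
    refine .of_dotProduct_mulVec_nonneg (isHermitian_of_isSymm hA) fun x => ?_
    simp only [dotProduct, Matrix.mulVec, star_trivial]
    calc (0:ℝ) ≤ ∑ i, ∑ j, x i * x j * A i j := hAq x
      _ = ∑ i, x i * ∑ j, A i j * x j := by
          rw [Finset.sum_congr rfl fun i _ => (Finset.mul_sum _ _ _)]
          exact Finset.sum_congr rfl fun i _ => Finset.sum_congr rfl fun j _ => by ring
  obtain ⟨N, hN⟩ : ∃ N : Matrix (Fin m) (Fin m) ℝ, A = N.conjTranspose * N := by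
    open scoped MatrixOrder in
    exact ⟨CFC.sqrt A, by
      rw [← Matrix.star_eq_conjTranspose, (CFC.sqrt_nonneg A).isSelfAdjoint.star_eq,
        CFC.sqrt_mul_sqrt_self A hps.nonneg]⟩
  have hA' : ∀ i j, A i j = ∑ k, N k i * N k j := by
    intro i j
    rw [hN]
    simp [Matrix.mul_apply, Matrix.conjTranspose_apply]
  intro c
  have key : ∀ i j, c i * c j * (Matrix.of fun i j => A i j * B i j) i j
      = ∑ k, (c i * N k i) * (c j * N k j) * B i j := by
    intro i j
    rw [Matrix.of_apply, hA', Finset.sum_mul, Finset.mul_sum]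
    exact Finset.sum_congr rfl fun k _ => by ring
  simp_rw [key]
  rw [sum_rotate]
  exact Finset.sum_nonneg fun k _ => hB fun i => c i * N k i

lemma psdq_pow {m : ℕ} {B : Matrix (Fin m) (Fin m) ℝ} (hs : B.IsSymm) (hB : PosSemidefQuad B)
    (k : ℕ) : PosSemidefQuad (Matrix.of fun i j => B i j ^ k) := by
  induction k with
  | zero =>
    intro c
    simp only [Matrix.of_apply, pow_zero, mul_one]
    have : ∑ i, ∑ j, c i * c j = (∑ i, c i) * (∑ j, c j) := by
      rw [Finset.sum_mul_sum]
    rw [this]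
    exact mul_self_nonneg _
  | succ k ih =>
    have := psdq_mul hs hB ih
    intro c
    have h2 := this c
    simp only [Matrix.of_apply] at h2 ⊢
    simpa [pow_succ, mul_comm, mul_assoc, mul_left_comm] using h2

lemma psdq_exp {m : ℕ} {B : Matrix (Fin m) (Fin m) ℝ} (hs : B.IsSymm) (hB : PosSemidefQuad B) :
    PosSemidefQuad (Matrix.of fun i j => Real.exp (B i j)) := by
  intro c
  have hexp : ∀ x : ℝ, Real.exp x = ∑' k : ℕ, x ^ k / k.factorial := by
    intro x
    rw [Real.exp_eq_exp_ℝ, NormedSpace.exp_eq_tsum_div]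
  have hsum : ∀ p : Fin m × Fin m, Summable (fun k : ℕ => c p.1 * c p.2 * (B p.1 p.2 ^ k / k.factorial)) :=
    fun p => (Real.summable_pow_div_factorial _).mul_left _
  calc (0:ℝ) ≤ ∑' k : ℕ, ∑ p : Fin m × Fin m, c p.1 * c p.2 * (B p.1 p.2 ^ k / k.factorial) := by
        refine tsum_nonneg fun k => ?_
        have h1 : ∑ p : Fin m × Fin m, c p.1 * c p.2 * (B p.1 p.2 ^ k / ↑k.factorial)
            = (∑ i, ∑ j, c i * c j * B i j ^ k) / k.factorial := by
          rw [Fintype.sum_prod_type, Finset.sum_div]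
          refine Finset.sum_congr rfl fun i _ => ?_
          rw [Finset.sum_div]
          exact Finset.sum_congr rfl fun j _ => by ring
        rw [h1]
        have := psdq_pow hs hB k c
        simp only [Matrix.of_apply] at this
        positivity
    _ = ∑ p : Fin m × Fin m, ∑' k : ℕ, c p.1 * c p.2 * (B p.1 p.2 ^ k / k.factorial) :=
        Summable.tsum_finsetSum fun p _ => hsum p
    _ = ∑ i, ∑ j, c i * c j * (Matrix.of fun i j => Real.exp (B i j)) i j := by
        rw [Fintype.sum_prod_type]
        refine Finset.sum_congr rfl fun i _ => Finset.sum_congr rfl fun j _ => ?_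
        rw [tsum_mul_left, Matrix.of_apply, hexp]

lemma expand_shift {n : ℕ} (F : Fin n → Fin n → ℝ) (c : Fin n → ℝ) (i0 : Fin n) (s : ℝ) :
    ∑ i, ∑ j, (c i - if i = i0 then s else 0) * (c j - if j = i0 then s else 0) * F i j
      = ∑ i, ∑ j, c i * c j * F i j - s * ∑ j, c j * F i0 j - s * ∑ i, c i * F i i0
        + s * s * F i0 i0 := by
  have P : ∀ i j, (c i - if i = i0 then s else 0) * (c j - if j = i0 then s else 0) * F i j
      = c i * c j * F i j - (if i = i0 then s * (c j * F i j) else 0)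
        - (if j = i0 then s * (c i * F i j) else 0)
        + (if i = i0 then (if j = i0 then s * (s * F i j) else 0) else 0) := by
    intro i j
    by_cases h1 : i = i0 <;> by_cases h2 : j = i0 <;> simp [h1, h2] <;> ring
  simp only [P, Finset.sum_add_distrib, Finset.sum_sub_distrib, Finset.sum_ite_irrel,
    Finset.sum_const_zero, Finset.sum_ite_eq', Finset.mem_univ, if_true, ← Finset.mul_sum]
  ring

lemma forward_dir {n : ℕ} (K : Matrix (Fin n) (Fin n) ℝ) (hsymm : K.IsSymm) (i0 : Fin n)
    (hK : CondPosSemidef K) {α : ℝ} (hα : 0 < α) :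
    PosSemidefQuad (Matrix.of fun i j => Real.exp (α * K i j)) := by
  set B : Matrix (Fin n) (Fin n) ℝ :=
    Matrix.of fun i j => α * K i j - α * K i i0 - α * K i0 j + α * K i0 i0 with hB
  have hBsymm : B.IsSymm := by
    ext i j
    simp only [hB, Matrix.transpose_apply, Matrix.of_apply]
    rw [hsymm.apply i j, hsymm.apply i i0, hsymm.apply i0 j]
    ring
  have hBq : PosSemidefQuad B := by
    intro c
    set s : ℝ := ∑ i, c i with hs
    set e : Fin n → ℝ := fun i => c i - if i = i0 then s else 0 with he
    have hesum : ∑ i, e i = 0 := by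
      simp [he, Finset.sum_sub_distrib, Finset.sum_ite_eq', ← hs]
    have h0 := hK e hesum
    have key1 := expand_shift K c i0 s
    have key2 : ∑ i, ∑ j, c i * c j * B i j
        = α * (∑ i, ∑ j, c i * c j * K i j - s * ∑ j, c j * K i0 j - s * ∑ i, c i * K i i0
            + s * s * K i0 i0) := by
      have hrow : ∀ i j, c i * c j * B i j
          = α * (c i * (c j * K i j)) - α * ((c i * K i i0) * c j)
            - α * (c i * (c j * K i0 j)) + α * ((c i * c j) * K i0 i0) := by
        intro i j
        simp only [hB, Matrix.of_apply]
        ring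
      have hS : ∑ i, ∑ j, c i * c j * K i j = ∑ i, c i * ∑ j, c j * K i j :=
        Finset.sum_congr rfl fun i _ => by
          rw [Finset.mul_sum]
          exact Finset.sum_congr rfl fun j _ => by ring
      simp only [hrow, Finset.sum_add_distrib, Finset.sum_sub_distrib, ← Finset.mul_sum,
        ← Finset.sum_mul, ← hs]
      rw [hS]
      ring
    rw [key2]
    refine mul_nonneg hα.le ?_
    simp only [he] at h0
    rw [← key1]
    exact h0
  intro c
  set u : Fin n → ℝ := fun i => α * K i i0 - α * K i0 i0 / 2 with hu
  set d : Fin n → ℝ := fun i => c i * Real.exp (u i) with hd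
  have hpt : ∀ i j, Real.exp (α * K i j) = Real.exp (B i j) * (Real.exp (u i) * Real.exp (u j)) := by
    intro i j
    rw [← Real.exp_add, ← Real.exp_add]
    congr 1
    simp only [hB, hu, Matrix.of_apply]
    rw [hsymm.apply i0 j]
    ring
  have hmain := psdq_exp hBsymm hBq d
  calc (0:ℝ) ≤ ∑ i, ∑ j, d i * d j * (Matrix.of fun i j => Real.exp (B i j)) i j := hmain
    _ = ∑ i, ∑ j, c i * c j * (Matrix.of fun i j => Real.exp (α * K i j)) i j := by
        refine Finset.sum_congr rfl fun i _ => Finset.sum_congr rfl fun j _ => ?_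
        simp only [Matrix.of_apply, hd, hpt i j]
        ring

lemma slope_exp_tendsto (x : ℝ) :
    Filter.Tendsto (fun α : ℝ => (Real.exp (α * x) - 1) / α) (nhdsWithin 0 (Set.Ioi 0)) (nhds x) := by
  have hd : HasDerivAt (fun α : ℝ => Real.exp (α * x)) x 0 := by
    have h1 : HasDerivAt (fun α : ℝ => α * x) x 0 := hasDerivAt_mul_const x
    have := h1.exp
    simpa using this
  have h2 := hasDerivAt_iff_tendsto_slope.mp hd
  have h3 : Filter.Tendsto (slope (fun α : ℝ => Real.exp (α * x)) 0) (nhdsWithin 0 (Set.Ioi 0)) (nhds x) :=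
    h2.mono_left (nhdsWithin_mono 0 (fun y hy => ne_of_gt hy))
  refine h3.congr' ?_
  filter_upwards [self_mem_nhdsWithin] with α (hα : α ∈ Set.Ioi 0)
  rw [slope_def_field]
  simp

lemma reverse_dir {n : ℕ} (K : Matrix (Fin n) (Fin n) ℝ)
    (h : ∀ α : ℝ, 0 < α → PosSemidefQuad (Matrix.of fun i j => Real.exp (α * K i j))) :
    CondPosSemidef K := by
  intro c hc
  set f : ℝ → ℝ := fun α => ∑ i, ∑ j, c i * c j * ((Real.exp (α * K i j) - 1) / α) with hf
  have hnonneg : ∀ α : ℝ, 0 < α → 0 ≤ f α := by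
    intro α hα
    have h1 := h α hα c
    simp only [Matrix.of_apply] at h1
    have h2 : ∑ i, ∑ j, c i * c j = 0 := by
      rw [← Finset.sum_mul_sum]
      rw [hc]
      ring
    have h3 : f α = ((∑ i, ∑ j, c i * c j * Real.exp (α * K i j))
        - ∑ i, ∑ j, c i * c j) / α := by
      simp only [hf]
      rw [← Finset.sum_sub_distrib, Finset.sum_div]
      refine Finset.sum_congr rfl fun i _ => ?_
      rw [← Finset.sum_sub_distrib, Finset.sum_div]
      refine Finset.sum_congr rfl fun j _ => ?_
      field_simp
    rw [h3, h2, sub_zero]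
    positivity
  have htend : Filter.Tendsto f (nhdsWithin 0 (Set.Ioi 0)) (nhds (∑ i, ∑ j, c i * c j * K i j)) := by
    simp only [hf]
    refine tendsto_finset_sum _ fun i _ => tendsto_finset_sum _ fun j _ => ?_
    have := (slope_exp_tendsto (K i j)).const_mul (c i * c j)
    simpa [mul_assoc] using this
  refine ge_of_tendsto htend ?_
  filter_upwards [self_mem_nhdsWithin] with α (hα : α ∈ Set.Ioi 0)
  exact hnonneg α hα

/-- **Schoenberg's theorem**: a real symmetric `n × n` matrix `K` is conditionally positive
semidefinite if and only if, for every real `α > 0`, the entrywise exponential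
`(exp (α * K i j))` is positive semidefinite. -/
theorem schoenberg_cpd_iff_entrywise_exp_posSemidef (n : ℕ)
    (K : Matrix (Fin n) (Fin n) ℝ) (hsymm : K.IsSymm) :
    CondPosSemidef K ↔
      ∀ α : ℝ, 0 < α → PosSemidefQuad (Matrix.of fun i j => Real.exp (α * K i j)) := by
  constructor
  · intro hK α hα
    rcases Nat.eq_zero_or_pos n with h0 | h0
    · subst h0
      intro c
      simp
    · exact forward_dir K hsymm ⟨0, h0⟩ hK hα
  · exact reverse_dir K
end
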